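/- For every integer k > 0 and every 0 ≤ j ≤ n − 1, the map [(k, x, w)] ↦ [(0, (x_1, …, x_j, x_{j+1} + k, x_{j+2}, …, x_n), (0, …, 0, w_{j+1} − k, w_{j+2}, …, w_n))] (with j zeros at the start of the last tuple, and ∞ − k := ∞) is a well-defined target-preserving bijection from {g ∈ (F_n)_{k,j} : w_{j+1} ≥ k} onto (F_n)_{0,j}. -/

import Mathlib

/-! Common setup for the groupoid `F_n` of the quantum sphere `S_q^{2n+1}`. -/

/-- `x_i + w_i ≥ 0` for all `i` (vacuous at coordinates where `w_i = ∞`). -/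
def okPos {n : ℕ} (x : Fin n → ℤ) (w : Fin n → ℕ∞) : Prop :=
  ∀ i, ∀ m : ℕ, w i = (m : ℕ∞) → 0 ≤ x i + (m : ℤ)

/-- The defining condition of `F̃_n`: whenever `w_i = ∞`,
`x_i = -z - x_1 - ⋯ - x_{i-1}` and `x_j = 0` for `j > i`. -/
def condF {n : ℕ} (z : ℤ) (x : Fin n → ℤ) (w : Fin n → ℕ∞) : Prop :=
  ∀ i, w i = ⊤ → (x i = -z - ∑ j ∈ Finset.Iio i, x j) ∧ (∀ j, i < j → x j = 0)

/-- The set `F̃_n` of admissible triples `(z, x, w)`. -/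
abbrev FTil (n : ℕ) : Type :=
  {p : ℤ × (Fin n → ℤ) × (Fin n → ℕ∞) // okPos p.2.1 p.2.2 ∧ condF p.1 p.2.1 p.2.2}

/-- `ν(w)`: keep coordinates before the first `∞`, replace all later ones by `∞`. -/
def qnu {n : ℕ} (w : Fin n → ℕ∞) : Fin n → ℕ∞ :=
  fun i => if ∃ j, j ≤ i ∧ w j = ⊤ then ⊤ else w i

/-- Addition of an integer to an extended natural number (`a + ∞ = ∞`). -/
def addZN (a : ℤ) (b : ℕ∞) : ℕ∞ :=
  if b = ⊤ then ⊤ else (((a + (b.toNat : ℤ)).toNat : ℕ) : ℕ∞)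

/-- Coordinatewise sum `x + w`. -/
def addxw {n : ℕ} (x : Fin n → ℤ) (w : Fin n → ℕ∞) : Fin n → ℕ∞ :=
  fun i => addZN (x i) (w i)

/-- The relation `(z, x, w) ∼ (z', x', w')` iff `z = z'`, `x = x'`, `ν(w) = ν(w')`. -/
def FRel {n : ℕ} (a b : FTil n) : Prop :=
  a.val.1 = b.val.1 ∧ a.val.2.1 = b.val.2.1 ∧ qnu a.val.2.2 = qnu b.val.2.2

instance FSetoid (n : ℕ) : Setoid (FTil n) where
  r := FRel
  iseqv := ⟨fun _ => ⟨rfl, rfl, rfl⟩, fun h => ⟨h.1.symm, h.2.1.symm, h.2.2.symm⟩,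
    fun h1 h2 => ⟨h1.1.trans h2.1, h1.2.1.trans h2.2.1, h1.2.2.trans h2.2.2⟩⟩

/-- The groupoid `F_n = F̃_n / ∼`. -/
abbrev Fgpd (n : ℕ) : Type := Quotient (FSetoid n)

/-- The `z`-component of a class in `F_n`. -/
def qzp {n : ℕ} (g : Fgpd n) : ℤ :=
  Quotient.lift (fun a : FTil n => a.val.1) (fun a b h => (h : FRel a b).1) g

/-- The `x`-component of a class in `F_n`. -/
def qxp {n : ℕ} (g : Fgpd n) : Fin n → ℤ :=
  Quotient.lift (fun a : FTil n => a.val.2.1) (fun a b h => (h : FRel a b).2.1) g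

/-- The source `ν(w)` of a class in `F_n`. -/
def qsrc {n : ℕ} (g : Fgpd n) : Fin n → ℕ∞ :=
  Quotient.lift (fun a : FTil n => qnu a.val.2.2) (fun a b h => (h : FRel a b).2.2) g

/-- The target `ν(x + w)` of a class in `F_n` (computed on a representative). -/
noncomputable def qtgt {n : ℕ} (g : Fgpd n) : Fin n → ℕ∞ :=
  qnu (addxw g.out.val.2.1 g.out.val.2.2)

/-- `qIsMul g h p` states that the product `g · h` is defined and equals `p`:
the source of `g` equals the target of `h`, and `p = [(z + z', x + x', w')]`
(a class in `F_n` is determined by its `z`-, `x`-components and its source). -/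
def qIsMul {n : ℕ} (g h p : Fgpd n) : Prop :=
  qsrc g = qtgt h ∧ qzp p = qzp g + qzp h ∧
    (∀ i, qxp p i = qxp g i + qxp h i) ∧ qsrc p = qsrc h

/-- The subset `(F_n)_{k,j}` of classes of degree `k` whose source vanishes in the
first `j` coordinates. -/
def Fkj (n : ℕ) (k : ℤ) (j : ℕ) : Set (Fgpd n) :=
  {g : Fgpd n | qzp g = k ∧ ∀ i : Fin n, (i : ℕ) < j → qsrc g i = 0}

section Aux

variable {n : ℕ}

lemma addZN_top (a : ℤ) : addZN a ⊤ = ⊤ := if_pos rfl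

lemma addZN_coe (a : ℤ) (m : ℕ) : addZN a (m : ℕ∞) = (((a + m).toNat : ℕ) : ℕ∞) := by
  simp [addZN]

lemma addZN_eq_top_iff {a : ℤ} {b : ℕ∞} : addZN a b = ⊤ ↔ b = ⊤ := by
  unfold addZN; split <;> simp_all

lemma addZN_zero (b : ℕ∞) : addZN 0 b = b := by
  induction b using ENat.recTopCoe with
  | top => exact addZN_top 0
  | coe m => simp [addZN_coe]

lemma addZN_addZN {a c : ℤ} {b : ℕ∞} (h : ∀ m : ℕ, b = (m : ℕ∞) → 0 ≤ c + m) :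
    addZN a (addZN c b) = addZN (a + c) b := by
  induction b using ENat.recTopCoe with
  | top => simp [addZN_top]
  | coe m =>
    have h0 : 0 ≤ c + m := h m rfl
    rw [addZN_coe, addZN_coe, addZN_coe]
    congr 1
    omega

lemma k_le_addZN (k : ℕ) (b : ℕ∞) : (k : ℕ∞) ≤ addZN (k : ℤ) b := by
  induction b using ENat.recTopCoe with
  | top => simp [addZN_top]
  | coe m =>
    rw [addZN_coe]
    have : ((k : ℤ) + m).toNat = k + m := by omega
    rw [this]
    exact_mod_cast Nat.le_add_right k m

lemma le_addZN_hyp {k : ℕ} {b : ℕ∞} (h : (k : ℕ∞) ≤ b) :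
    ∀ m : ℕ, b = (m : ℕ∞) → 0 ≤ -(k : ℤ) + m := by
  intro m hm
  subst hm
  have : k ≤ m := by exact_mod_cast h
  omega


lemma qnu_eq_top_iff {w : Fin n → ℕ∞} {i : Fin n} :
    qnu w i = ⊤ ↔ ∃ j, j ≤ i ∧ w j = ⊤ := by
  unfold qnu
  split
  next h => simpa using h
  next h =>
    push_neg at h
    constructor
    · intro hw; exact ⟨i, le_rfl, hw⟩
    · rintro ⟨j, hj, hw⟩; exact absurd hw (h j hj)

lemma qnu_eq_self {w : Fin n → ℕ∞} {i : Fin n} (h : ¬ ∃ j, j ≤ i ∧ w j = ⊤) :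
    qnu w i = w i := if_neg h

lemma qnu_eq_zero {w : Fin n → ℕ∞} {i : Fin n} (h : qnu w i = 0) : w i = 0 := by
  unfold qnu at h
  split at h
  · exact absurd h (by simp)
  · exact h

/-- Add `c` to the `j`-th coordinate of `x`. -/
def shiftX {n : ℕ} (c : ℤ) (j : ℕ) (x : Fin n → ℤ) : Fin n → ℤ :=
  fun i => if (i : ℕ) = j then x i + c else x i

/-- Add `c` to the `j`-th coordinate of `w` (`∞ + c = ∞`). -/
def shiftW {n : ℕ} (c : ℤ) (j : ℕ) (w : Fin n → ℕ∞) : Fin n → ℕ∞ :=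
  fun i => if (i : ℕ) = j then addZN c (w i) else w i

lemma shiftW_top_iff {c : ℤ} {j : ℕ} {w : Fin n → ℕ∞} {i : Fin n} :
    shiftW c j w i = ⊤ ↔ w i = ⊤ := by
  unfold shiftW
  split
  · exact addZN_eq_top_iff
  · rfl

lemma qnu_shiftW (c : ℤ) (j : ℕ) (w : Fin n → ℕ∞) :
    qnu (shiftW c j w) = fun i : Fin n => if (i : ℕ) = j then addZN c (qnu w i) else qnu w i := by
  funext i
  have hcond : (∃ j', j' ≤ i ∧ shiftW c j w j' = ⊤) ↔ (∃ j', j' ≤ i ∧ w j' = ⊤) := by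
    constructor <;> rintro ⟨j', hj', ht⟩ <;> exact ⟨j', hj', by
      first
        | exact shiftW_top_iff.mp ht
        | exact shiftW_top_iff.mpr ht⟩
  by_cases h : ∃ j', j' ≤ i ∧ w j' = ⊤
  · have h1 : qnu (shiftW c j w) i = ⊤ := qnu_eq_top_iff.mpr (hcond.mpr h)
    have h2 : qnu w i = ⊤ := qnu_eq_top_iff.mpr h
    rw [h1, h2]
    split <;> simp [addZN_top]
  · rw [qnu_eq_self (fun hh => h (hcond.mp hh)), qnu_eq_self h]
    rfl

lemma qzp_mk (a : FTil n) : qzp (⟦a⟧ : Fgpd n) = a.val.1 := rfl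
lemma qxp_mk (a : FTil n) : qxp (⟦a⟧ : Fgpd n) = a.val.2.1 := rfl
lemma qsrc_mk (a : FTil n) : qsrc (⟦a⟧ : Fgpd n) = qnu a.val.2.2 := rfl

lemma qzp_out (g : Fgpd n) : g.out.val.1 = qzp g := by
  conv_rhs => rw [← g.out_eq]
  rfl

lemma qxp_out (g : Fgpd n) : g.out.val.2.1 = qxp g := by
  conv_rhs => rw [← g.out_eq]
  rfl
lemma qsrc_out (g : Fgpd n) : qnu g.out.val.2.2 = qsrc g := by
  conv_rhs => rw [← g.out_eq]
  rfl

lemma Fgpd_ext {g h : Fgpd n} (hz : qzp g = qzp h) (hx : qxp g = qxp h)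
    (hs : qsrc g = qsrc h) : g = h := by
  induction g using Quotient.ind with | _ a =>
  induction h using Quotient.ind with | _ b =>
  exact Quotient.sound ⟨hz, hx, hs⟩

lemma qnu_addxw_congr {x : Fin n → ℤ} {w w' : Fin n → ℕ∞} (h : qnu w = qnu w') :
    qnu (addxw x w) = qnu (addxw x w') := by
  have key : ∀ (v : Fin n → ℕ∞) (i : Fin n),
      qnu (addxw x v) i = if qnu v i = ⊤ then ⊤ else addZN (x i) (qnu v i) := by
    intro v i
    have hcond : (∃ j', j' ≤ i ∧ addxw x v j' = ⊤) ↔ (∃ j', j' ≤ i ∧ v j' = ⊤) := by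
      constructor <;> rintro ⟨j', hj', ht⟩ <;>
        exact ⟨j', hj', by
          first
            | exact addZN_eq_top_iff.mp ht
            | exact addZN_eq_top_iff.mpr ht⟩
    by_cases hc : ∃ j', j' ≤ i ∧ v j' = ⊤
    · rw [qnu_eq_top_iff.mpr (hcond.mpr hc), if_pos (qnu_eq_top_iff.mpr hc)]
    · rw [qnu_eq_self (fun hh => hc (hcond.mp hh)),
        if_neg (fun hh => hc (qnu_eq_top_iff.mp hh)), qnu_eq_self hc]
      rfl
  funext i
  rw [key w i, key w' i, h]

lemma qtgt_mk (a : FTil n) : qtgt (⟦a⟧ : Fgpd n) = qnu (addxw a.val.2.1 a.val.2.2) := by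
  have hrel : FRel (⟦a⟧ : Fgpd n).out a := Quotient.mk_out a
  unfold qtgt
  rw [hrel.2.1]
  exact qnu_addxw_congr hrel.2.2

lemma qtgt_out (g : Fgpd n) : qtgt g = qnu (addxw g.out.val.2.1 g.out.val.2.2) := rfl

lemma sum_shiftX {c : ℤ} {j : ℕ} (x : Fin n → ℤ) (s : Finset (Fin n)) (jf : Fin n)
    (hjf : (jf : ℕ) = j) :
    ∑ i ∈ s, shiftX c j x i = (∑ i ∈ s, x i) + (if jf ∈ s then c else 0) := by
  have : ∀ i ∈ s, shiftX c j x i = x i + (if i = jf then c else 0) := by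
    intro i _
    unfold shiftX
    by_cases h : i = jf
    · subst h; simp [hjf]
    · have : (i : ℕ) ≠ j := fun hh => h (Fin.ext (hh.trans hjf.symm))
      simp [this, h]
  rw [Finset.sum_congr rfl this, Finset.sum_add_distrib, Finset.sum_ite_eq' s jf (fun _ => c)]

lemma adm_shift {j : ℕ} (hjn : j < n) (z c : ℤ) (x : Fin n → ℤ) (w : Fin n → ℕ∞)
    (hok : okPos x w) (hcf : condF z x w)
    (h0 : ∀ i : Fin n, (i : ℕ) < j → w i = 0)
    (hge : ∀ m : ℕ, w ⟨j, hjn⟩ = (m : ℕ∞) → 0 ≤ -c + m) :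
    okPos (shiftX c j x) (shiftW (-c) j w) ∧ condF (z - c) (shiftX c j x) (shiftW (-c) j w) := by
  set jf : Fin n := ⟨j, hjn⟩ with hjf
  constructor
  · intro i m hm
    by_cases hij : (i : ℕ) = j
    · have hi : i = jf := Fin.ext hij
      subst hi
      unfold shiftW at hm
      rw [if_pos hij] at hm
      by_cases hw' : w jf = ⊤
      · rw [hw', addZN_top] at hm; exact absurd hm (by simp)
      · obtain ⟨m0, hw⟩ : ∃ m0 : ℕ, w jf = (m0 : ℕ∞) := by
          cases hval : w jf using ENat.recTopCoe with
          | top => exact absurd hval hw'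
          | coe m0 => exact ⟨m0, rfl⟩
        rw [hw, addZN_coe] at hm
        have hm0 : 0 ≤ -c + (m0 : ℤ) := hge m0 hw
        have hok0 : 0 ≤ x jf + (m0 : ℤ) := hok jf m0 hw
        have hmm : (m : ℤ) = -c + m0 := by
          have h2 := WithTop.coe_injective hm
          omega
        unfold shiftX
        rw [if_pos hij]
        omega
    · unfold shiftW at hm
      rw [if_neg hij] at hm
      unfold shiftX
      rw [if_neg hij]
      exact hok i m hm
  · intro i hi
    have hwi : w i = ⊤ := shiftW_top_iff.mp hi
    obtain ⟨hx1, hx2⟩ := hcf i hwi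
    have hij : ¬ (i : ℕ) < j := by
      intro hlt
      rw [h0 i hlt] at hwi
      exact absurd hwi (by simp)
    constructor
    · by_cases hcase : (i : ℕ) = j
      · have hnot : jf ∉ Finset.Iio i := by
          simp [Finset.mem_Iio, Fin.lt_def, hjf, hcase]
        rw [sum_shiftX x _ jf rfl, if_neg hnot]
        unfold shiftX
        rw [if_pos hcase, hx1]
        ring
      · have hmem : jf ∈ Finset.Iio i := by
          simp only [Finset.mem_Iio, Fin.lt_def, hjf, Fin.val_mk]
          omega
        rw [sum_shiftX x _ jf rfl, if_pos hmem]
        unfold shiftX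
        rw [if_neg hcase, hx1]
        ring
    · intro j' hj'
      have hj'ne : (j' : ℕ) ≠ j := by
        have : (i : ℕ) < (j' : ℕ) := hj'
        omega
      unfold shiftX
      rw [if_neg hj'ne]
      exact hx2 j' hj'

open Classical in
/-- The map `φ`. -/
noncomputable def phiF (n k j : ℕ) (g : Fgpd n) : Fgpd n :=
  if h : okPos (shiftX (k : ℤ) j g.out.val.2.1) (shiftW (-(k : ℤ)) j g.out.val.2.2) ∧
      condF (g.out.val.1 - k) (shiftX (k : ℤ) j g.out.val.2.1)
        (shiftW (-(k : ℤ)) j g.out.val.2.2) then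
    ⟦⟨(g.out.val.1 - k, shiftX (k : ℤ) j g.out.val.2.1, shiftW (-(k : ℤ)) j g.out.val.2.2), h⟩⟧
  else g

lemma phi_spec {k j : ℕ} (hjn : j < n) (g : Fgpd n)
    (hz : qzp g = k) (h0 : ∀ i : Fin n, (i : ℕ) < j → qsrc g i = 0)
    (hge : (k : ℕ∞) ≤ qsrc g ⟨j, hjn⟩) :
    qzp (phiF n k j g) = 0 ∧ qxp (phiF n k j g) = shiftX (k : ℤ) j (qxp g) ∧
    qsrc (phiF n k j g) =
      (fun i : Fin n => if (i : ℕ) = j then addZN (-(k : ℤ)) (qsrc g i) else qsrc g i) ∧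
    qtgt (phiF n k j g) = qtgt g := by
  set a := g.out with ha
  -- coordinates of the representative
  have hw0 : ∀ i : Fin n, (i : ℕ) < j → a.val.2.2 i = 0 := by
    intro i hi
    exact qnu_eq_zero ((qsrc_out g) ▸ h0 i hi)
  have hgew : ∀ m : ℕ, a.val.2.2 ⟨j, hjn⟩ = (m : ℕ∞) → 0 ≤ -(k : ℤ) + m := by
    intro m hm
    have hcond : ¬ ∃ j', j' ≤ (⟨j, hjn⟩ : Fin n) ∧ a.val.2.2 j' = ⊤ := by
      rintro ⟨j', hj', ht⟩
      rcases lt_or_eq_of_le hj' with hlt | heq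
      · rw [hw0 j' hlt] at ht; exact absurd ht (by simp)
      · rw [heq] at ht; rw [hm] at ht; exact absurd ht (by simp)
    have : qsrc g ⟨j, hjn⟩ = (m : ℕ∞) := by
      rw [← qsrc_out g, qnu_eq_self hcond, hm]
    exact le_addZN_hyp (this ▸ hge) m rfl
  have hadm := adm_shift hjn a.val.1 (k : ℤ) a.val.2.1 a.val.2.2 a.prop.1 a.prop.2 hw0 hgew
  have hphi : phiF n k j g =
      ⟦⟨(a.val.1 - k, shiftX (k : ℤ) j a.val.2.1, shiftW (-(k : ℤ)) j a.val.2.2), hadm⟩⟧ := by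
    unfold phiF
    exact dif_pos hadm
  refine ⟨?_, ?_, ?_, ?_⟩
  · rw [hphi, qzp_mk]
    simp only
    rw [qzp_out g, hz]
    ring
  · rw [hphi, qxp_mk]
    conv_rhs => rw [← qxp_out g]
  · rw [hphi, qsrc_mk]
    simp only
    rw [qnu_shiftW]
    simp only [← qsrc_out g]
    rfl
  · rw [hphi, qtgt_mk]
    have haw : addxw (shiftX (k : ℤ) j a.val.2.1) (shiftW (-(k : ℤ)) j a.val.2.2) =
        addxw a.val.2.1 a.val.2.2 := by
      funext i
      unfold addxw shiftX shiftW
      by_cases hij : (i : ℕ) = j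
      · rw [if_pos hij, if_pos hij]
        have hi : i = (⟨j, hjn⟩ : Fin n) := Fin.ext hij
        rw [addZN_addZN (hi ▸ hgew)]
        congr 1
        ring
      · rw [if_neg hij, if_neg hij]
    rw [haw, qtgt_out g]

lemma addZN_cancel {k : ℕ} {b1 b2 : ℕ∞} (h1 : (k : ℕ∞) ≤ b1) (h2 : (k : ℕ∞) ≤ b2)
    (h : addZN (-(k : ℤ)) b1 = addZN (-(k : ℤ)) b2) : b1 = b2 := by
  have hke : (k : ℤ) + -(k : ℤ) = 0 := by ring
  have e1 : addZN (k : ℤ) (addZN (-(k : ℤ)) b1) = b1 := by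
    rw [addZN_addZN (le_addZN_hyp h1), hke, addZN_zero]
  have e2 : addZN (k : ℤ) (addZN (-(k : ℤ)) b2) = b2 := by
    rw [addZN_addZN (le_addZN_hyp h2), hke, addZN_zero]
  rw [← e1, ← e2, h]

/-- For `k > 0` and `0 ≤ j ≤ n - 1`, the map
`[(k, x, w)] ↦ [(0, (x₁, …, x_j, x_{j+1} + k, x_{j+2}, …), (0, …, 0, w_{j+1} - k, w_{j+2}, …))]`
(with `∞ - k = ∞`) is a well-defined target-preserving bijection from
`{g ∈ (F_n)_{k,j} : w_{j+1} ≥ k}` onto `(F_n)_{0,j}`. -/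
theorem stmt14 (n : ℕ) (hn : 1 ≤ n) (k : ℕ) (hk : 0 < k) (j : ℕ) (hj : j ≤ n - 1) :
    ∃ φ : Fgpd n → Fgpd n,
      (∀ g : Fgpd n, g ∈ Fkj n k j → (k : ℕ∞) ≤ qsrc g ⟨j, by omega⟩ →
        qzp (φ g) = 0 ∧
        (∀ i : Fin n, qxp (φ g) i = if (i : ℕ) = j then qxp g i + k else qxp g i) ∧
        (∀ i : Fin n, qsrc (φ g) i =
          if (i : ℕ) = j then addZN (-(k : ℤ)) (qsrc g i) else qsrc g i) ∧
        qtgt (φ g) = qtgt g) ∧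
      Set.BijOn φ {g : Fgpd n | g ∈ Fkj n k j ∧ (k : ℕ∞) ≤ qsrc g ⟨j, by omega⟩}
        (Fkj n 0 j) := by

  have hjn : j < n := by omega
  refine ⟨phiF n k j, ?_, ?_, ?_, ?_⟩
  · -- pointwise description
    intro g hg hge
    obtain ⟨s1, s2, s3, s4⟩ := phi_spec hjn g hg.1 hg.2 hge
    refine ⟨s1, ?_, ?_, s4⟩
    · intro i
      rw [s2]
      rfl
    · intro i
      rw [s3]
  · -- MapsTo
    intro g hg
    obtain ⟨s1, s2, s3, s4⟩ := phi_spec hjn g hg.1.1 hg.1.2 hg.2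
    refine ⟨s1, ?_⟩
    intro i hi
    rw [s3]
    simp only
    rw [if_neg (by omega : ¬ (i : ℕ) = j)]
    exact hg.1.2 i hi
  · -- InjOn
    intro g1 hg1 g2 hg2 heq
    obtain ⟨s11, s12, s13, s14⟩ := phi_spec hjn g1 hg1.1.1 hg1.1.2 hg1.2
    obtain ⟨s21, s22, s23, s24⟩ := phi_spec hjn g2 hg2.1.1 hg2.1.2 hg2.2
    refine Fgpd_ext (hg1.1.1.trans hg2.1.1.symm) ?_ ?_
    · have hx : shiftX (k : ℤ) j (qxp g1) = shiftX (k : ℤ) j (qxp g2) := by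
        rw [← s12, ← s22, heq]
      funext i
      have := congrFun hx i
      unfold shiftX at this
      by_cases hij : (i : ℕ) = j
      · rw [if_pos hij, if_pos hij] at this; omega
      · rwa [if_neg hij, if_neg hij] at this
    · have hs : (fun i : Fin n => if (i : ℕ) = j then addZN (-(k : ℤ)) (qsrc g1 i)
          else qsrc g1 i) = (fun i : Fin n => if (i : ℕ) = j then addZN (-(k : ℤ)) (qsrc g2 i)
          else qsrc g2 i) := by
        rw [← s13, ← s23, heq]
      funext i
      have hthis := congrFun hs i
      by_cases hij : (i : ℕ) = j
      · rw [if_pos hij, if_pos hij] at hthis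
        have hi : i = (⟨j, hjn⟩ : Fin n) := Fin.ext hij
        subst hi
        exact addZN_cancel hg1.2 hg2.2 hthis
      · rwa [if_neg hij, if_neg hij] at hthis
  · -- SurjOn
    intro h hh
    set b := h.out with hb
    have hz0 : b.val.1 = 0 := by rw [qzp_out h, hh.1]
    have hv0 : ∀ i : Fin n, (i : ℕ) < j → b.val.2.2 i = 0 := by
      intro i hi
      exact qnu_eq_zero ((qsrc_out h) ▸ hh.2 i hi)
    have hgeb : ∀ m : ℕ, b.val.2.2 ⟨j, hjn⟩ = (m : ℕ∞) → 0 ≤ -(-(k : ℤ)) + m := by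
      intro m _; omega
    have adm := adm_shift hjn b.val.1 (-(k : ℤ)) b.val.2.1 b.val.2.2 b.prop.1 b.prop.2 hv0 hgeb
    set g : Fgpd n := ⟦⟨(b.val.1 - -(k : ℤ), shiftX (-(k : ℤ)) j b.val.2.1,
      shiftW (-(-(k : ℤ))) j b.val.2.2), adm⟩⟧ with hgdef
    have hgz : qzp g = (k : ℤ) := by
      rw [hgdef, qzp_mk]
      simp only
      rw [hz0]; ring
    have hgsrc : qsrc g = fun i : Fin n =>
        if (i : ℕ) = j then addZN (k : ℤ) (qnu b.val.2.2 i) else qnu b.val.2.2 i := by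
      rw [hgdef, qsrc_mk]
      simp only
      rw [qnu_shiftW, neg_neg]
    have hgx : qxp g = shiftX (-(k : ℤ)) j b.val.2.1 := by rw [hgdef, qxp_mk]
    have hg0 : ∀ i : Fin n, (i : ℕ) < j → qsrc g i = 0 := by
      intro i hi
      rw [hgsrc]
      simp only
      rw [if_neg (by omega : ¬ (i : ℕ) = j)]
      rw [qsrc_out h]
      exact hh.2 i hi
    have hgge : (k : ℕ∞) ≤ qsrc g ⟨j, hjn⟩ := by
      rw [hgsrc]
      simp only
      rw [if_pos trivial]
      exact k_le_addZN k _
    refine ⟨g, ⟨⟨hgz, hg0⟩, hgge⟩, ?_⟩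
    obtain ⟨s1, s2, s3, s4⟩ := phi_spec hjn g hgz hg0 hgge
    refine Fgpd_ext (s1.trans hh.1.symm) ?_ ?_
    · rw [s2, hgx]
      conv_rhs => rw [← qxp_out h]
      funext i
      unfold shiftX
      by_cases hij : (i : ℕ) = j
      · rw [if_pos hij, if_pos hij]; ring
      · rw [if_neg hij, if_neg hij]
    · rw [s3, hgsrc]
      conv_rhs => rw [← qsrc_out h]
      funext i
      simp only
      by_cases hij : (i : ℕ) = j
      · rw [if_pos hij, if_pos hij]
        rw [addZN_addZN (by intro m _; omega)]
        have hzero : -(k : ℤ) + k = 0 := by ring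
        rw [hzero, addZN_zero]
      · rw [if_neg hij, if_neg hij]
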